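/- Let (X, dist) be a compact metric space and Φ : ℝ × X → X a continuous flow (Φ(0,x) = x, Φ(t+s,x) = Φ(t,Φ(s,x))). Let C > 1 satisfy dist(Φ(τ,x),Φ(τ,y)) ≤ C·dist(x,y) for all |τ| ≤ 1 and x, y ∈ X. Assume the time-one map f = Φ(1,·) has the weighted shadowing property with weight C: there exist L₀ > 0 and d₀ > 0 such that for every 0 < d ≤ d₀ and every sequence (x_k)_{k≥0} in X with Σ_{k≥0} C^k·dist(x_{k+1}, f(x_k)) ≤ d there exists q ∈ X with Σ_{k≥0} C^k·dist(x_k, f^k(q)) ≤ L₀·d. Then there exists L > 0 such that for every 0 < d ≤ d₀ and every function Ψ : ℝ_{≥0} → X with ψ(t) ≤ d for all t ≥ 0 and Σ_{k≥0} C^k·ψ(k) ≤ d, where ψ(t) := sup_{|τ|≤1, t+τ≥0} dist(Ψ(t+τ), Φ(τ,Ψ(t))), there exists a point p ∈ X such that the Lebesgue upper integral ∫₀^∞ C^t·dist(Φ(t,p), Ψ(t)) dt is at most L·d. -/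

import Mathlib

open MeasureTheory

/-- The Lebesgue upper integral of a (possibly non-measurable) nonnegative-valued error
function `f` over a set `s`: the infimum of `∫⁻ g` over measurable majorants `g`. -/
noncomputable def upperIntegral (f : ℝ → ℝ) (s : Set ℝ) : ENNReal :=
  ⨅ (g : ℝ → ENNReal) (_ : Measurable g) (_ : ∀ x ∈ s, ENNReal.ofReal (f x) ≤ g x),
    ∫⁻ x in s, g x

/-- The error function `ψ(t) = sup_{|τ|≤1, t+τ≥0} dist(Ψ(t+τ), Φ(τ,Ψ(t)))` of a
pseudotrajectory `Ψ` of the flow `Φ`. -/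
noncomputable def errFn {X : Type*} [MetricSpace X] (Φ : ℝ → X → X) (Ψ : ℝ → X) (t : ℝ) : ℝ :=
  ⨆ τ : {τ : ℝ // |τ| ≤ 1 ∧ 0 ≤ t + τ}, dist (Ψ (t + τ)) (Φ τ (Ψ t))

/-- Weighted shadowing for flows on a compact metric space (the paper's Theorem 7), with the
discrete-time weighted shadowing property of the time-one map taken as a hypothesis. -/
theorem stmt_7 (X : Type*) [MetricSpace X] [CompactSpace X]
    (Φ : ℝ → X → X)
    (hΦc : Continuous fun p : ℝ × X => Φ p.1 p.2)
    (hΦ0 : ∀ x, Φ 0 x = x)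
    (hΦadd : ∀ t s x, Φ (t + s) x = Φ t (Φ s x))
    (C : ℝ) (hC : 1 < C)
    (hLip : ∀ τ : ℝ, |τ| ≤ 1 → ∀ x y : X, dist (Φ τ x) (Φ τ y) ≤ C * dist x y)
    (L₀ d₀ : ℝ) (hL₀ : 0 < L₀) (hd₀ : 0 < d₀)
    (hdisc : ∀ d : ℝ, 0 < d → d ≤ d₀ → ∀ x : ℕ → X,
      (∑' k : ℕ, ENNReal.ofReal (C ^ k * dist (x (k + 1)) (Φ 1 (x k)))) ≤ ENNReal.ofReal d →
      ∃ q : X,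
        (∑' k : ℕ, ENNReal.ofReal (C ^ k * dist (x k) ((Φ 1)^[k] q))) ≤
          ENNReal.ofReal (L₀ * d)) :
    ∃ L : ℝ, 0 < L ∧
      ∀ d : ℝ, 0 < d → d ≤ d₀ → ∀ Ψ : ℝ → X,
        (∀ t : ℝ, 0 ≤ t → errFn Φ Ψ t ≤ d) →
        (∑' k : ℕ, ENNReal.ofReal (C ^ k * errFn Φ Ψ k)) ≤ ENNReal.ofReal d →
        ∃ p : X,
          upperIntegral (fun t => C ^ t * dist (Φ t p) (Ψ t)) (Set.Ici 0) ≤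
            ENNReal.ofReal (L * d) := by
  have hC0 : (0:ℝ) < C := lt_trans one_pos hC
  have hC1 : (1:ℝ) ≤ C := hC.le
  refine ⟨C ^ 2 * L₀ + C, by positivity, ?_⟩
  intro d hd hdd₀ Ψ hψd hψsum
  -- basic facts about errFn
  have hbdd : ∀ t : ℝ, BddAbove (Set.range fun τ : {τ : ℝ // |τ| ≤ 1 ∧ 0 ≤ t + τ} =>
      dist (Ψ (t + τ)) (Φ τ (Ψ t))) := by
    intro t
    refine ⟨Metric.diam (Set.univ : Set X), ?_⟩
    rintro _ ⟨τ, rfl⟩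
    exact Metric.dist_le_diam_of_mem isCompact_univ.isBounded (Set.mem_univ _) (Set.mem_univ _)
  have hle : ∀ t τ : ℝ, |τ| ≤ 1 → 0 ≤ t + τ → dist (Ψ (t + τ)) (Φ τ (Ψ t)) ≤ errFn Φ Ψ t := by
    intro t τ h1 h2
    exact le_ciSup (hbdd t) ⟨τ, h1, h2⟩
  have herr0 : ∀ t : ℝ, 0 ≤ t → 0 ≤ errFn Φ Ψ t := by
    intro t ht
    exact le_trans dist_nonneg (hle t 0 (by norm_num) (by simpa))
  -- iterate of time-one map
  have hiter : ∀ (k : ℕ) (x : X), Φ (k : ℝ) x = (Φ 1)^[k] x := by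
    intro k
    induction k with
    | zero => intro x; simpa using hΦ0 x
    | succ n ih =>
      intro x
      have h1 : ((n + 1 : ℕ) : ℝ) = 1 + (n : ℝ) := by push_cast; ring
      rw [h1, hΦadd, Function.iterate_succ', Function.comp_apply, ih]
  -- apply the discrete hypothesis to x_k = Ψ k
  have hsum1 : (∑' k : ℕ, ENNReal.ofReal (C ^ k * dist (Ψ ((k + 1 : ℕ) : ℝ)) (Φ 1 (Ψ (k : ℝ)))))
      ≤ ENNReal.ofReal d := by
    refine le_trans (ENNReal.tsum_le_tsum fun k => ?_) hψsum
    refine ENNReal.ofReal_le_ofReal (mul_le_mul_of_nonneg_left ?_ (by positivity))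
    have h1 : ((k + 1 : ℕ) : ℝ) = (k : ℝ) + 1 := by push_cast; ring
    rw [h1]
    exact hle (k : ℝ) 1 (by norm_num) (by positivity)
  obtain ⟨q, hq⟩ := hdisc d hd hdd₀ (fun k => Ψ k) hsum1
  refine ⟨q, ?_⟩
  set D : ℕ → ℝ := fun k => dist (Ψ (k : ℝ)) ((Φ 1)^[k] q) with hD
  have hD0 : ∀ k, 0 ≤ D k := fun k => dist_nonneg
  set a : ℕ → ENNReal := fun k =>
    ENNReal.ofReal (C ^ (k + 1) * (C * D k + errFn Φ Ψ (k : ℝ))) with ha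
  set g : ℝ → ENNReal := fun t => a ⌊t⌋₊ with hg
  have hmeas : Measurable g :=
    Measurable.comp (g := a) (f := fun t : ℝ => ⌊t⌋₊) measurable_from_top Nat.measurable_floor
  have hmaj : ∀ t ∈ Set.Ici (0:ℝ),
      ENNReal.ofReal (C ^ t * dist (Φ t q) (Ψ t)) ≤ g t := by
    intro t ht
    simp only [Set.mem_Ici] at ht
    set k := ⌊t⌋₊ with hk
    have hk1 : (k : ℝ) ≤ t := Nat.floor_le ht
    have hk2 : t < (k : ℝ) + 1 := Nat.lt_floor_add_one t
    set τ := t - (k : ℝ) with hτ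
    have hτ0 : 0 ≤ τ := by simp [hτ]; linarith
    have hτ1 : |τ| ≤ (1:ℝ) := by rw [abs_of_nonneg hτ0]; simp [hτ]; linarith
    have htkτ : t = (k : ℝ) + τ := by ring
    have hΦt : Φ t q = Φ τ ((Φ 1)^[k] q) := by
      rw [show t = τ + (k : ℝ) by ring, hΦadd, hiter]
    have hdist : dist (Φ t q) (Ψ t) ≤ C * D k + errFn Φ Ψ (k : ℝ) := by
      calc dist (Φ t q) (Ψ t)
          ≤ dist (Φ τ ((Φ 1)^[k] q)) (Φ τ (Ψ (k : ℝ))) + dist (Φ τ (Ψ (k : ℝ))) (Ψ t) := by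
            rw [hΦt]; exact dist_triangle _ _ _
        _ ≤ C * D k + errFn Φ Ψ (k : ℝ) := by
            refine add_le_add ?_ ?_
            · calc dist (Φ τ ((Φ 1)^[k] q)) (Φ τ (Ψ (k : ℝ)))
                  ≤ C * dist ((Φ 1)^[k] q) (Ψ (k : ℝ)) := hLip τ hτ1 _ _
                _ = C * D k := by rw [hD, dist_comm]
            · rw [dist_comm, htkτ]
              exact hle (k : ℝ) τ hτ1 (by rw [← htkτ]; exact ht)
    have hpow : C ^ t ≤ C ^ (k + 1) := by
      calc C ^ t ≤ C ^ (((k + 1 : ℕ) : ℝ)) := by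
            apply Real.rpow_le_rpow_of_exponent_le hC1
            push_cast; linarith
        _ = C ^ (k + 1) := Real.rpow_natCast C (k + 1)
    refine ENNReal.ofReal_le_ofReal ?_
    calc C ^ t * dist (Φ t q) (Ψ t)
        ≤ C ^ (k + 1) * (C * D k + errFn Φ Ψ (k : ℝ)) := by
          apply mul_le_mul hpow hdist dist_nonneg (by positivity)
      _ = _ := rfl
  refine le_trans (iInf_le_of_le g (iInf_le_of_le hmeas (iInf_le_of_le hmaj le_rfl))) ?_
  -- compute the integral of g
  have hunion : Set.Ici (0:ℝ) = ⋃ k : ℕ, Set.Ico (k : ℝ) ((k : ℝ) + 1) := by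
    ext t
    simp only [Set.mem_Ici, Set.mem_iUnion, Set.mem_Ico]
    constructor
    · intro ht
      exact ⟨⌊t⌋₊, Nat.floor_le ht, Nat.lt_floor_add_one t⟩
    · rintro ⟨k, hk, -⟩
      exact le_trans (Nat.cast_nonneg k) hk
  have hdisj : Pairwise (Function.onFun Disjoint fun k : ℕ => Set.Ico (k : ℝ) ((k : ℝ) + 1)) := by
    intro i j hij
    rw [Function.onFun, Set.Ico_disjoint_Ico]
    rcases hij.lt_or_gt with h | h
    · have : (i : ℝ) + 1 ≤ (j : ℝ) := by exact_mod_cast h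
      calc min ((i:ℝ)+1) ((j:ℝ)+1) ≤ (i:ℝ)+1 := min_le_left _ _
        _ ≤ (j : ℝ) := this
        _ ≤ max (i:ℝ) (j:ℝ) := le_max_right _ _
    · have : (j : ℝ) + 1 ≤ (i : ℝ) := by exact_mod_cast h
      calc min ((i:ℝ)+1) ((j:ℝ)+1) ≤ (j:ℝ)+1 := min_le_right _ _
        _ ≤ (i : ℝ) := this
        _ ≤ max (i:ℝ) (j:ℝ) := le_max_left _ _
  have hint : ∫⁻ t in Set.Ici (0:ℝ), g t = ∑' k : ℕ, a k := by
    rw [hunion, lintegral_iUnion (fun k => measurableSet_Ico) hdisj]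
    congr 1
    ext k
    have hconst : ∫⁻ t in Set.Ico (k : ℝ) ((k : ℝ) + 1), g t
        = ∫⁻ _ in Set.Ico (k : ℝ) ((k : ℝ) + 1), a k := by
      refine setLIntegral_congr_fun measurableSet_Ico (fun t ht => ?_)
      have h0t : (0:ℝ) ≤ t := le_trans (Nat.cast_nonneg k) ht.1
      have : ⌊t⌋₊ = k := (Nat.floor_eq_iff h0t).2 ⟨ht.1, ht.2⟩
      simp [hg, this]
    rw [hconst, setLIntegral_const, Real.volume_Ico]
    simp
  rw [hint]
  -- bound the sum
  have hsplit : ∀ k : ℕ, a k = ENNReal.ofReal (C ^ 2) * ENNReal.ofReal (C ^ k * D k)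
      + ENNReal.ofReal C * ENNReal.ofReal (C ^ k * errFn Φ Ψ (k : ℝ)) := by
    intro k
    show ENNReal.ofReal (C ^ (k + 1) * (C * D k + errFn Φ Ψ (k : ℝ))) = _
    have h1 : C ^ (k + 1) * (C * D k + errFn Φ Ψ (k : ℝ))
        = C ^ 2 * (C ^ k * D k) + C * (C ^ k * errFn Φ Ψ (k : ℝ)) := by ring
    rw [h1, ENNReal.ofReal_add (by positivity) (by
      have := herr0 (k : ℝ) (Nat.cast_nonneg k); positivity),
      ENNReal.ofReal_mul (by positivity), ENNReal.ofReal_mul hC0.le]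
  calc ∑' k : ℕ, a k
      = ENNReal.ofReal (C ^ 2) * (∑' k : ℕ, ENNReal.ofReal (C ^ k * D k))
        + ENNReal.ofReal C * (∑' k : ℕ, ENNReal.ofReal (C ^ k * errFn Φ Ψ (k : ℝ))) := by
        simp_rw [hsplit]
        rw [ENNReal.tsum_add, ENNReal.tsum_mul_left, ENNReal.tsum_mul_left]
    _ ≤ ENNReal.ofReal (C ^ 2) * ENNReal.ofReal (L₀ * d)
        + ENNReal.ofReal C * ENNReal.ofReal d := by
        exact add_le_add (mul_le_mul_right hq _) (mul_le_mul_right hψsum _)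
    _ = ENNReal.ofReal ((C ^ 2 * L₀ + C) * d) := by
        rw [← ENNReal.ofReal_mul (by positivity), ← ENNReal.ofReal_mul hC0.le,
          ← ENNReal.ofReal_add (by positivity) (by positivity)]
        ring_nf
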